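/- arXiv:2507.05034 — 4 statements merged into one kernel-verified Lean document; each statement's English description precedes it below -/
import Mathlib

section
/- For every ν ∈ ℝ^n with ν ≠ 0, the Fourier multiplier m^{δ,β}(ν) = c^{δ,β} ∫_{B_δ(0)} (cos(ν·z) - 1)/‖z‖^β dz is strictly negative, and m^{δ,β}(0) = 0. -/
open MeasureTheory Metric Real Set Filter
open scoped RealInnerProductSpace

lemma one_sub_cos_le_half_sq' (x : ℝ) : 1 - Real.cos x ≤ x ^ 2 / 2 := by
  have h := Real.sin_sq_eq_half_sub (x / 2)
  have h2 : Real.sin (x / 2) ^ 2 ≤ (x / 2) ^ 2 := Real.sin_sq_le_sq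
  have : 2 * (x / 2) = x := by ring
  rw [this] at h
  nlinarith

lemma integrableOn_norm_rpow_ball {n : ℕ} (hn : 1 ≤ n) {s : ℝ} (hs : -(n : ℝ) < s) {δ : ℝ}
    (hδ : 0 < δ) :
    IntegrableOn (fun z : EuclideanSpace ℝ (Fin n) ↦ ‖z‖ ^ s) (ball 0 δ) := by
  have hmeas : Measurable (fun z : EuclideanSpace ℝ (Fin n) ↦ ‖z‖ ^ s) := by fun_prop
  rcases le_or_gt 0 s with hs0 | hs0
  · refine Measure.integrableOn_of_bounded (M := max (δ ^ s) 1) measure_ball_lt_top.ne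
      hmeas.aestronglyMeasurable ?_
    filter_upwards [ae_restrict_mem measurableSet_ball] with z hz
    rw [Real.norm_eq_abs, abs_of_nonneg (Real.rpow_nonneg (norm_nonneg _) _)]
    exact le_max_of_le_left (Real.rpow_le_rpow (norm_nonneg _) (le_of_lt (mem_ball_zero_iff.mp hz)) hs0)
  · -- s < 0 : layer cake
    constructor
    · exact hmeas.aestronglyMeasurable
    rw [hasFiniteIntegral_iff_ofReal (Eventually.of_forall fun z =>
      Real.rpow_nonneg (norm_nonneg _) _)]
    rw [lintegral_eq_lintegral_meas_le _ (Eventually.of_forall fun z =>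
      Real.rpow_nonneg (norm_nonneg _) _) hmeas.aemeasurable]
    have hδs : 0 < δ ^ s := Real.rpow_pos_of_pos hδ s
    set μ := (volume : Measure (EuclideanSpace ℝ (Fin n)))
    have key : ∀ t : ℝ, 0 < t →
        (μ.restrict (ball 0 δ)) {z | t ≤ ‖z‖ ^ s} ≤
          min (μ (ball 0 δ)) (μ (closedBall (0 : EuclideanSpace ℝ (Fin n)) (t ^ s⁻¹))) := by
      intro t ht
      refine le_min ?_ ?_
      · rw [Measure.restrict_apply (measurableSet_le measurable_const hmeas)]
        exact measure_mono inter_subset_right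
      · calc (μ.restrict (ball 0 δ)) {z | t ≤ ‖z‖ ^ s}
            ≤ μ {z | t ≤ ‖z‖ ^ s} := Measure.restrict_le_self _
          _ ≤ μ (closedBall 0 (t ^ s⁻¹)) := by
              apply measure_mono
              intro z hz
              simp only [mem_setOf_eq] at hz
              rcases eq_or_ne z 0 with rfl | hz0
              · simp [mem_closedBall, Real.rpow_nonneg ht.le]
              · rw [mem_closedBall_zero_iff]
                exact (Real.le_rpow_inv_iff_of_neg (norm_pos_iff.mpr hz0) ht hs0).mpr hz
    have hns : s⁻¹ * (n : ℝ) < -1 := by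
      have h1 : s * s⁻¹ = 1 := mul_inv_cancel₀ hs0.ne
      have h2 : s⁻¹ < 0 := inv_lt_zero.mpr hs0
      nlinarith
    have A : (∫⁻ t in Ioc 0 (δ ^ s),
        (μ.restrict (ball 0 δ)) {z | t ≤ ‖z‖ ^ s}) < ⊤ := by
      refine lt_of_le_of_lt (setLIntegral_mono' measurableSet_Ioc fun t ht =>
        ((key t ht.1).trans (min_le_left _ _))) ?_
      rw [setLIntegral_const]
      exact ENNReal.mul_lt_top measure_ball_lt_top measure_Ioc_lt_top
    have B : (∫⁻ t in Ioi (δ ^ s),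
        (μ.restrict (ball 0 δ)) {z | t ≤ ‖z‖ ^ s}) < ⊤ := by
      have hb : ∀ t ∈ Ioi (δ ^ s), (μ.restrict (ball 0 δ)) {z | t ≤ ‖z‖ ^ s} ≤
          ENNReal.ofReal (t ^ (s⁻¹ * (n : ℝ))) * μ (ball 0 1) := by
        intro t ht
        have ht0 : 0 < t := lt_trans hδs ht
        refine ((key t ht0).trans (min_le_right _ _)).trans (le_of_eq ?_)
        rw [μ.addHaar_closedBall (0 : EuclideanSpace ℝ (Fin n))
          (Real.rpow_nonneg ht0.le _), finrank_euclideanSpace_fin,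
          ← Real.rpow_natCast (t ^ s⁻¹) n, ← Real.rpow_mul ht0.le]
      refine lt_of_le_of_lt (setLIntegral_mono' measurableSet_Ioi hb) ?_
      rw [lintegral_mul_const' _ _ measure_ball_lt_top.ne]
      exact ENNReal.mul_lt_top
        ((integrableOn_Ioi_rpow_of_lt hns hδs).setLIntegral_lt_top) measure_ball_lt_top
    calc ∫⁻ t in Ioi 0, (μ.restrict (ball 0 δ)) {z | t ≤ ‖z‖ ^ s}
        ≤ ∫⁻ t in Ioc 0 (δ ^ s) ∪ Ioi (δ ^ s), (μ.restrict (ball 0 δ)) {z | t ≤ ‖z‖ ^ s} :=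
          lintegral_mono_set (Ioc_union_Ioi_eq_Ioi hδs.le).symm.subset
      _ ≤ (∫⁻ t in Ioc 0 (δ ^ s), (μ.restrict (ball 0 δ)) {z | t ≤ ‖z‖ ^ s}) +
          ∫⁻ t in Ioi (δ ^ s), (μ.restrict (ball 0 δ)) {z | t ≤ ‖z‖ ^ s} :=
          lintegral_union_le _ _ _
      _ < ⊤ := ENNReal.add_lt_top.2 ⟨A, B⟩

/-- The Fourier multiplier `m^{δ,β}(ν) = c^{δ,β} ∫_{B_δ(0)} (cos(ν·z)-1)/‖z‖^β dz`
is strictly negative for every `ν ≠ 0`, and vanishes at `ν = 0`. -/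
theorem multiplier_neg_of_ne_zero (n : ℕ) (hn : 1 ≤ n) (δ β c : ℝ)
    (hδ : 0 < δ) (hβ : β < n + 2) (hc : 0 < c) :
    (∀ ν : EuclideanSpace ℝ (Fin n), ν ≠ 0 →
      c * (∫ z in ball (0 : EuclideanSpace ℝ (Fin n)) δ,
        (Real.cos ⟪ν, z⟫ - 1) / ‖z‖ ^ β) < 0) ∧
    c * (∫ z in ball (0 : EuclideanSpace ℝ (Fin n)) δ,
        (Real.cos ⟪(0 : EuclideanSpace ℝ (Fin n)), z⟫ - 1) / ‖z‖ ^ β) = 0 := by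
  constructor
  · intro ν hν
    set g : EuclideanSpace ℝ (Fin n) → ℝ := fun z => (1 - Real.cos ⟪ν, z⟫) / ‖z‖ ^ β with hg
    have hgnn : ∀ z, 0 ≤ g z := fun z =>
      div_nonneg (by linarith [Real.cos_le_one ⟪ν, z⟫]) (Real.rpow_nonneg (norm_nonneg _) _)
    have hcont : Continuous fun z : EuclideanSpace ℝ (Fin n) => ⟪ν, z⟫ :=
      continuous_const.inner continuous_id
    have hgmeas : Measurable g :=
      ((continuous_const.sub (Real.continuous_cos.comp hcont)).measurable).div
        (by fun_prop : Measurable fun z : EuclideanSpace ℝ (Fin n) => ‖z‖ ^ β)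
    -- integrability of g on the ball
    have hint : IntegrableOn g (ball 0 δ) := by
      have hbound : IntegrableOn
          (fun z : EuclideanSpace ℝ (Fin n) => ‖ν‖ ^ 2 / 2 * ‖z‖ ^ (2 - β)) (ball 0 δ) :=
        (integrableOn_norm_rpow_ball hn (by push_cast; linarith) hδ).const_mul _
      refine hbound.mono' hgmeas.aestronglyMeasurable ?_
      filter_upwards with z
      rw [Real.norm_eq_abs, abs_of_nonneg (hgnn z)]
      rcases eq_or_ne z 0 with rfl | hz0
      · simp only [hg, inner_zero_right, Real.cos_zero, sub_self, zero_div]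
        positivity
      · have hz : (0:ℝ) < ‖z‖ := norm_pos_iff.mpr hz0
        have h1 : 1 - Real.cos ⟪ν, z⟫ ≤ ‖ν‖ ^ 2 * ‖z‖ ^ 2 / 2 := by
          refine (one_sub_cos_le_half_sq' _).trans ?_
          have := abs_real_inner_le_norm ν z
          have h2 : ⟪ν, z⟫ ^ 2 ≤ (‖ν‖ * ‖z‖) ^ 2 := by
            rw [← sq_abs]
            exact pow_le_pow_left₀ (abs_nonneg _) this 2
          nlinarith
        have hzb : (0:ℝ) < ‖z‖ ^ β := Real.rpow_pos_of_pos hz β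
        calc g z ≤ (‖ν‖ ^ 2 * ‖z‖ ^ 2 / 2) / ‖z‖ ^ β := by
              exact div_le_div_of_nonneg_right h1 hzb.le
          _ = ‖ν‖ ^ 2 / 2 * ‖z‖ ^ (2 - β) := by
              rw [Real.rpow_sub hz, ← Real.rpow_natCast ‖z‖ 2]
              push_cast
              ring
    -- positivity of the integral of g
    have hpos : 0 < ∫ z in ball (0 : EuclideanSpace ℝ (Fin n)) δ, g z := by
      rw [setIntegral_pos_iff_support_of_nonneg_ae
        (Eventually.of_forall hgnn) hint]
      -- find an open subset of the support
      have hν' : (0:ℝ) < ‖ν‖ := norm_pos_iff.mpr hν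
      set U : Set (EuclideanSpace ℝ (Fin n)) :=
        {z | 0 < ⟪ν, z⟫ ∧ ⟪ν, z⟫ < π} ∩ ball 0 δ with hU
      have hUopen : IsOpen U := by
        refine IsOpen.inter ?_ isOpen_ball
        exact (isOpen_Ioo.preimage hcont)
      have hUne : U.Nonempty := by
        set r : ℝ := min (δ / (2 * ‖ν‖)) (π / (2 * ‖ν‖ ^ 2)) with hr
        have hrpos : 0 < r := lt_min (by positivity) (by positivity)
        refine ⟨r • ν, ⟨?_, ?_⟩, ?_⟩
        · rw [real_inner_smul_right, real_inner_self_eq_norm_sq]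
          positivity
        · rw [real_inner_smul_right, real_inner_self_eq_norm_sq]
          have : r ≤ π / (2 * ‖ν‖ ^ 2) := min_le_right _ _
          have hpi : 0 < π := Real.pi_pos
          calc r * ‖ν‖ ^ 2 ≤ π / (2 * ‖ν‖ ^ 2) * ‖ν‖ ^ 2 := by
                exact mul_le_mul_of_nonneg_right this (by positivity)
            _ = π / 2 := by field_simp
            _ < π := by linarith
        · rw [mem_ball_zero_iff, norm_smul, Real.norm_eq_abs, abs_of_pos hrpos]
          have : r ≤ δ / (2 * ‖ν‖) := min_le_left _ _
          calc r * ‖ν‖ ≤ δ / (2 * ‖ν‖) * ‖ν‖ := mul_le_mul_of_nonneg_right this (norm_nonneg _)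
            _ = δ / 2 := by field_simp
            _ < δ := by linarith
      have hUsub : U ⊆ Function.support g ∩ ball 0 δ := by
        rintro z ⟨⟨h1, h2⟩, hzb⟩
        refine ⟨?_, hzb⟩
        have hz0 : z ≠ 0 := by
          rintro rfl
          simp at h1
        have hcos : Real.cos ⟪ν, z⟫ < 1 := by
          refine lt_of_le_of_ne (Real.cos_le_one _) ?_
          intro hcos1
          have hpi : 0 < π := Real.pi_pos
          have := (Real.cos_eq_one_iff_of_lt_of_lt (by linarith) (by linarith)).mp hcos1
          linarith
        have : 0 < g z :=
          div_pos (by linarith) (Real.rpow_pos_of_pos (norm_pos_iff.mpr hz0) _)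
        exact Function.mem_support.mpr this.ne'
      exact lt_of_lt_of_le (hUopen.measure_pos volume hUne) (measure_mono hUsub)
    have heq : ∀ z, (Real.cos ⟪ν, z⟫ - 1) / ‖z‖ ^ β = -g z := by
      intro z
      rw [hg]
      ring
    have : (∫ z in ball (0 : EuclideanSpace ℝ (Fin n)) δ,
        (Real.cos ⟪ν, z⟫ - 1) / ‖z‖ ^ β) = -∫ z in ball (0 : EuclideanSpace ℝ (Fin n)) δ, g z := by
      rw [← integral_neg]
      exact integral_congr_ae (Eventually.of_forall fun z => heq z)
    rw [this]
    have : -(∫ z in ball (0 : EuclideanSpace ℝ (Fin n)) δ, g z) < 0 := by linarith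
    exact mul_neg_of_pos_of_neg hc this
  · simp
end

section
/- For periodic data with n < β < n+2, if f ∈ H^s(Tⁿ) with s ≥ 0 has zero mean, then the zero-mean solution u of L^{δ,β}u = f on Tⁿ belongs to H^{s+β−n}(Tⁿ); i.e., the solution gains β − n derivatives. -/
open MeasureTheory Metric Real
open scoped RealInnerProductSpace

/-- The lattice frequency `k ∈ ℤⁿ` viewed as a vector of `ℝⁿ`. -/
def latticeVec (n : ℕ) (k : Fin n → ℤ) : EuclideanSpace ℝ (Fin n) :=
  WithLp.toLp 2 (fun i => (k i : ℝ))

/-- The Fourier multiplier `m^{δ,β}(k)` of the nonlocal Laplacian at lattice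
frequency `k`. -/
noncomputable def nonlocalMultiplier (n : ℕ) (δ β c : ℝ) (k : Fin n → ℤ) : ℝ :=
  c * ∫ z in ball (0 : EuclideanSpace ℝ (Fin n)) δ,
    (Real.cos ⟪latticeVec n k, z⟫ - 1) / ‖z‖ ^ β

section Aux

open Set
open scoped Pointwise

lemma one_sub_cos_eq (t : ℝ) : 1 - Real.cos t = 2 * Real.sin (t/2) ^ 2 := by
  have h1 : Real.cos (2 * (t/2)) = 1 - 2 * Real.sin (t/2) ^ 2 := by
    rw [Real.cos_two_mul']
    have := Real.sin_sq_add_cos_sq (t/2)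
    linarith
  rw [show (2:ℝ) * (t/2) = t by ring] at h1
  linarith

lemma one_sub_cos_le (t : ℝ) : 1 - Real.cos t ≤ t^2 / 2 := by
  rw [one_sub_cos_eq]
  have h : |Real.sin (t/2)| ≤ |t/2| := Real.abs_sin_le_abs ..
  nlinarith [mul_self_le_mul_self (abs_nonneg (Real.sin (t/2))) h, sq_abs (Real.sin (t/2)), sq_abs (t/2)]

lemma quarter_sq_le_aux {t : ℝ} (ht : t ≤ 1) (hpos : 0 < t) : t^2/4 ≤ 2 * Real.sin (t/2) ^ 2 := by
  have h1 : 0 < t/2 := by linarith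
  have h2 : t/2 ≤ 1 := by linarith
  have hst := Real.sin_gt_sub_cube h1
  have ht3 : t^3 ≤ t := by nlinarith [sq_nonneg t, sq_nonneg (1-t), mul_pos hpos hpos]
  have hcube : (t/2)^3/4 ≤ (t/2)/16 := by nlinarith
  have hsin : (15:ℝ)/16 * (t/2) ≤ Real.sin (t/2) := by nlinarith
  nlinarith

lemma quarter_sq_le_one_sub_cos {t : ℝ} (ht : |t| ≤ 1) : t^2/4 ≤ 1 - Real.cos t := by
  rw [one_sub_cos_eq]
  rcases lt_trichotomy t 0 with h0 | rfl | h0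
  · have := quarter_sq_le_aux (t := -t) (by rw [abs_of_neg h0] at ht; exact ht) (by linarith)
    rw [show -t/2 = -(t/2) by ring, Real.sin_neg] at this
    nlinarith
  · simp
  · exact quarter_sq_le_aux (by rwa [abs_of_pos h0] at ht) h0

lemma lintegral_norm_rpow_lt_top (n : ℕ) (hn : 1 ≤ n) {p δ : ℝ} (hp : -(n:ℝ) < p) (hδ : 0 < δ) :
    ∫⁻ z in ball (0 : EuclideanSpace ℝ (Fin n)) δ, ENNReal.ofReal (‖z‖ ^ p) < ⊤ := by
  haveI : Nonempty (Fin n) := Fin.pos_iff_nonempty.mp hn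
  haveI : Nontrivial (EuclideanSpace ℝ (Fin n)) := inferInstance
  set E := EuclideanSpace ℝ (Fin n)
  rcases le_or_gt 0 p with hp0 | hp0
  · calc ∫⁻ z in ball (0:E) δ, ENNReal.ofReal (‖z‖ ^ p)
        ≤ ∫⁻ _ in ball (0:E) δ, ENNReal.ofReal (δ ^ p) := by
          refine setLIntegral_mono measurable_const fun z hz => ?_
          exact ENNReal.ofReal_le_ofReal (Real.rpow_le_rpow (norm_nonneg _)
            (le_of_lt (by simpa [dist_zero_right] using hz)) hp0)
      _ = ENNReal.ofReal (δ ^ p) * volume (ball (0:E) δ) := setLIntegral_const _ _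
      _ < ⊤ := ENNReal.mul_lt_top ENNReal.ofReal_lt_top measure_ball_lt_top
  · set V := volume (ball (0:E) 1) with hV
    set A : ℕ → Set E := fun j => {z : E | δ * (2⁻¹:ℝ)^(j+1) ≤ ‖z‖} ∩ ball 0 (δ * (2⁻¹:ℝ)^j) with hA
    have hcover : ball (0:E) δ \ {0} ⊆ ⋃ j : ℕ, A j := by
      rintro z ⟨hz, hz0⟩
      simp only [mem_ball, dist_zero_right] at hz
      have hzpos : 0 < ‖z‖ := norm_pos_iff.mpr (by simpa using hz0)
      have hex : ∃ m, δ * (2⁻¹:ℝ)^m ≤ ‖z‖ := by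
        obtain ⟨m, hm⟩ := exists_pow_lt_of_lt_one (div_pos hzpos hδ) (by norm_num : (2⁻¹:ℝ) < 1)
        exact ⟨m, by rw [mul_comm]; exact (le_div_iff₀ hδ).mp hm.le⟩
      classical
      have hj1 : δ * (2⁻¹:ℝ)^(Nat.find hex) ≤ ‖z‖ := Nat.find_spec hex
      have hj0 : Nat.find hex ≠ 0 := by
        intro h; rw [h] at hj1; simp at hj1; linarith
      obtain ⟨i, hi⟩ := Nat.exists_eq_succ_of_ne_zero hj0
      refine Set.mem_iUnion.mpr ⟨i, ⟨by rw [← Nat.succ_eq_add_one, ← hi]; exact hj1, ?_⟩⟩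
      have hmin := Nat.find_min hex (m := i) (by omega)
      simp only [mem_ball, dist_zero_right]
      push_neg at hmin
      exact hmin
    have hfr : Module.finrank ℝ E = n := finrank_euclideanSpace_fin
    have hterm : ∀ j : ℕ, ∫⁻ z in A j, ENNReal.ofReal (‖z‖ ^ p)
        ≤ ENNReal.ofReal ((δ * (2⁻¹:ℝ)^(j+1)) ^ p * (δ * (2⁻¹:ℝ)^j) ^ n) * V := by
      intro j
      have hpos1 : (0:ℝ) < δ * (2⁻¹:ℝ)^(j+1) := by positivity
      have hpos2 : (0:ℝ) ≤ δ * (2⁻¹:ℝ)^j := by positivity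
      calc ∫⁻ z in A j, ENNReal.ofReal (‖z‖ ^ p)
          ≤ ∫⁻ _ in A j, ENNReal.ofReal ((δ * (2⁻¹:ℝ)^(j+1)) ^ p) := by
            refine setLIntegral_mono measurable_const fun z hz => ?_
            exact ENNReal.ofReal_le_ofReal
              (Real.rpow_le_rpow_of_nonpos hpos1 hz.1 hp0.le)
        _ = ENNReal.ofReal ((δ * (2⁻¹:ℝ)^(j+1)) ^ p) * volume (A j) := setLIntegral_const _ _
        _ ≤ ENNReal.ofReal ((δ * (2⁻¹:ℝ)^(j+1)) ^ p) * volume (ball (0:E) (δ * (2⁻¹:ℝ)^j)) :=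
            mul_le_mul_right (measure_mono Set.inter_subset_right) _
        _ = ENNReal.ofReal ((δ * (2⁻¹:ℝ)^(j+1)) ^ p * (δ * (2⁻¹:ℝ)^j) ^ n) * V := by
            rw [Measure.addHaar_ball _ _ hpos2, hfr, ← mul_assoc,
              ← ENNReal.ofReal_mul (Real.rpow_nonneg hpos1.le _)]
    set w : ℝ := (2⁻¹:ℝ) ^ (p + (n:ℝ)) with hw
    have hwpos : 0 < w := Real.rpow_pos_of_pos (by norm_num) _
    have hwlt : w < 1 := Real.rpow_lt_one (by norm_num) (by norm_num) (by linarith)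
    set D : ℝ := δ ^ p * (2⁻¹:ℝ) ^ p * δ ^ n with hD
    have hkey : ∀ j : ℕ, (δ * (2⁻¹:ℝ)^(j+1)) ^ p * (δ * (2⁻¹:ℝ)^j) ^ n = D * w ^ j := by
      intro j
      have c2 : (0:ℝ) < 2⁻¹ := by norm_num
      have n1 : ((2⁻¹:ℝ) ^ (j+1) : ℝ) = (2⁻¹:ℝ) ^ ((j:ℝ)+1) := by
        rw [← Real.rpow_natCast (2⁻¹:ℝ) (j+1)]; norm_num
      have n2 : ((2⁻¹:ℝ) ^ j : ℝ) = (2⁻¹:ℝ) ^ (j:ℝ) := (Real.rpow_natCast _ _).symm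
      rw [Real.mul_rpow hδ.le (by positivity), mul_pow, n1, n2, ← Real.rpow_mul c2.le,
        ← Real.rpow_natCast ((2⁻¹:ℝ) ^ ((j:ℝ))) n, ← Real.rpow_mul c2.le,
        hD, hw, ← Real.rpow_natCast ((2⁻¹:ℝ) ^ (p + (n:ℝ))) j, ← Real.rpow_mul c2.le]
      have hexp : ((j:ℝ)+1)*p + (j:ℝ)*(n:ℝ) = p + (p+(n:ℝ))*(j:ℝ) := by ring
      calc δ^p * (2⁻¹:ℝ)^(((j:ℝ)+1)*p) * (δ^n * (2⁻¹:ℝ)^((j:ℝ)*(n:ℝ)))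
          = δ^p * δ^n * (2⁻¹:ℝ)^(((j:ℝ)+1)*p + (j:ℝ)*(n:ℝ)) := by
            rw [Real.rpow_add c2]; ring
        _ = δ^p * (2⁻¹:ℝ)^p * δ^n * (2⁻¹:ℝ)^((p+(n:ℝ))*(j:ℝ)) := by
            rw [hexp, Real.rpow_add c2]; ring
    calc ∫⁻ z in ball (0:E) δ, ENNReal.ofReal (‖z‖ ^ p)
        = ∫⁻ z in ball (0:E) δ \ {0}, ENNReal.ofReal (‖z‖ ^ p) := by
          refine (setLIntegral_congr ?_).symm
          exact diff_null_ae_eq_self (measure_singleton _)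
      _ ≤ ∫⁻ z in ⋃ j : ℕ, A j, ENNReal.ofReal (‖z‖ ^ p) := lintegral_mono_set hcover
      _ ≤ ∑' j : ℕ, ∫⁻ z in A j, ENNReal.ofReal (‖z‖ ^ p) := lintegral_iUnion_le _ _
      _ ≤ ∑' j : ℕ, ENNReal.ofReal (D * w ^ j) * V := by
          refine ENNReal.tsum_le_tsum fun j => ?_
          rw [← hkey j]; exact hterm j
      _ = ∑' j : ℕ, (ENNReal.ofReal D * V) * (ENNReal.ofReal w) ^ j := by
          refine tsum_congr fun j => ?_
          rw [ENNReal.ofReal_mul (by positivity), ENNReal.ofReal_pow hwpos.le]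
          ring
      _ = (ENNReal.ofReal D * V) * ∑' j : ℕ, (ENNReal.ofReal w) ^ j := ENNReal.tsum_mul_left
      _ < ⊤ := by
          rw [ENNReal.tsum_geometric]
          refine ENNReal.mul_lt_top (ENNReal.mul_lt_top ENNReal.ofReal_lt_top measure_ball_lt_top) ?_
          rw [ENNReal.inv_lt_top]
          exact tsub_pos_iff_lt.mpr (ENNReal.ofReal_lt_one.mpr hwlt)

lemma integrableOn_norm_rpow (n : ℕ) (hn : 1 ≤ n) {p δ : ℝ} (hp : -(n:ℝ) < p) (hδ : 0 < δ) :
    IntegrableOn (fun z : EuclideanSpace ℝ (Fin n) => ‖z‖ ^ p) (ball 0 δ) := by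
  have hm : Measurable fun x : ℝ => x ^ p := by measurability
  constructor
  · exact (hm.comp measurable_norm).aestronglyMeasurable
  · rw [hasFiniteIntegral_iff_ofReal
      (Filter.Eventually.of_forall fun z => Real.rpow_nonneg (norm_nonneg _) _)]
    exact lintegral_norm_rpow_lt_top n hn hp hδ

lemma coord_abs_le_norm {n : ℕ} (z : EuclideanSpace ℝ (Fin n)) (i : Fin n) : |z i| ≤ ‖z‖ := by
  rw [EuclideanSpace.norm_eq]
  rw [show |z i| = √(|z i| ^ 2) from (Real.sqrt_sq_eq_abs _).symm.trans (by rw [sq_abs])]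
  apply Real.sqrt_le_sqrt
  rw [sq_abs, show z i ^ 2 = ‖z i‖ ^ 2 from by rw [Real.norm_eq_abs, sq_abs]]
  exact Finset.single_le_sum (f := fun j => ‖z j‖ ^ 2) (fun j _ => by positivity) (Finset.mem_univ i)

lemma sq_div_le (n : ℕ) {β : ℝ} (z : EuclideanSpace ℝ (Fin n)) {a : ℝ} (ha : |a| ≤ ‖z‖) :
    a ^ 2 / ‖z‖ ^ β ≤ ‖z‖ ^ (2 - β) := by
  rcases eq_or_ne z 0 with rfl | hz
  · have : a = 0 := by simpa [abs_nonpos_iff] using ha.trans_eq (norm_zero)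
    simp [this, Real.zero_rpow, div_nonneg, Real.rpow_nonneg]
  · have hzpos : (0:ℝ) < ‖z‖ := norm_pos_iff.mpr hz
    have h1 : a ^ 2 ≤ ‖z‖ ^ (2:ℝ) := by
      rw [Real.rpow_two]
      nlinarith [abs_nonneg a, sq_abs a]
    rw [div_le_iff₀ (Real.rpow_pos_of_pos hzpos _), Real.rpow_sub hzpos, div_mul_cancel₀]
    · exact h1
    · exact (Real.rpow_pos_of_pos hzpos _).ne'

lemma integrableOn_one_sub_cos (n : ℕ) (hn : 1 ≤ n) {β δ : ℝ} (hβl : (n:ℝ) < β)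
    (hβu : β < n + 2) (hδ : 0 < δ) (K : EuclideanSpace ℝ (Fin n)) :
    IntegrableOn (fun z : EuclideanSpace ℝ (Fin n) => (1 - Real.cos ⟪K, z⟫) / ‖z‖ ^ β)
      (ball 0 δ) := by
  have hp : -(n:ℝ) < 2 - β := by linarith
  have hint := (integrableOn_norm_rpow n hn hp hδ).const_mul (‖K‖ ^ 2 / 2)
  refine Integrable.mono' hint ?_ ?_
  · have hc : Continuous fun z : EuclideanSpace ℝ (Fin n) => 1 - Real.cos ⟪K, z⟫ :=
      continuous_const.sub (Real.continuous_cos.comp (continuous_const.inner continuous_id))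
    have hm : Measurable fun x : ℝ => x ^ β := by measurability
    exact (hc.measurable.div (hm.comp measurable_norm)).aestronglyMeasurable
  · refine Filter.Eventually.of_forall fun z => ?_
    have h1 : 0 ≤ 1 - Real.cos ⟪K, z⟫ := by linarith [Real.cos_le_one ⟪K, z⟫]
    have h2 : 0 ≤ (‖z‖:ℝ) ^ β := Real.rpow_nonneg (norm_nonneg _) _
    rw [Real.norm_eq_abs, abs_of_nonneg (div_nonneg h1 h2)]
    rcases eq_or_ne K 0 with rfl | hK
    · simp only [inner_zero_left, Real.cos_zero, sub_self, zero_div]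
      positivity
    rcases eq_or_ne z 0 with rfl | hz
    · simp only [inner_zero_right, Real.cos_zero, sub_self, zero_div]
      positivity
    · have hKpos : (0:ℝ) < ‖K‖ := norm_pos_iff.mpr hK
      have hzb : (0:ℝ) < ‖z‖ ^ β := Real.rpow_pos_of_pos (norm_pos_iff.mpr hz) _
      set a : ℝ := ⟪K, z⟫ / ‖K‖ with haa
      have ha : |a| ≤ ‖z‖ := by
        rw [haa, abs_div, abs_of_pos hKpos, div_le_iff₀ hKpos, mul_comm]
        exact abs_real_inner_le_norm K z
      have hsq : ⟪K, z⟫ ^ 2 = ‖K‖ ^ 2 * a ^ 2 := by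
        rw [haa]; field_simp
      calc (1 - Real.cos ⟪K, z⟫) / ‖z‖ ^ β ≤ (⟪K, z⟫ ^ 2 / 2) / ‖z‖ ^ β := by
            apply (div_le_div_iff_of_pos_right hzb).mpr
            have := one_sub_cos_le ⟪K, z⟫; linarith
        _ = ‖K‖ ^ 2 / 2 * (a ^ 2 / ‖z‖ ^ β) := by rw [hsq]; ring
        _ ≤ ‖K‖ ^ 2 / 2 * ‖z‖ ^ (2 - β) := by
            exact mul_le_mul_of_nonneg_left (sq_div_le n z ha) (by positivity)

lemma integrableOn_coord_sq (n : ℕ) (hn : 1 ≤ n) {β δ : ℝ} (hβl : (n:ℝ) < β)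
    (hβu : β < n + 2) (hδ : 0 < δ) (i : Fin n) :
    IntegrableOn (fun z : EuclideanSpace ℝ (Fin n) => (z i) ^ 2 / ‖z‖ ^ β) (ball 0 δ) := by
  have hp : -(n:ℝ) < 2 - β := by linarith
  refine Integrable.mono' (integrableOn_norm_rpow n hn hp hδ) ?_
    (Filter.Eventually.of_forall fun z => ?_)
  · have hm : Measurable fun x : ℝ => x ^ β := by measurability
    have hc : Measurable fun z : EuclideanSpace ℝ (Fin n) => (z i) ^ 2 :=
      ((continuous_apply i).comp (PiLp.continuous_ofLp (p := 2) (β := fun _ : Fin n => ℝ))).measurable.pow_const 2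
    exact (hc.div (hm.comp measurable_norm)).aestronglyMeasurable
  · have h2 : 0 ≤ (‖z‖:ℝ) ^ β := Real.rpow_nonneg (norm_nonneg _) _
    rw [Real.norm_eq_abs, abs_of_nonneg (div_nonneg (sq_nonneg _) h2)]
    exact sq_div_le n z (coord_abs_le_norm z i)

lemma rotation_reduce (n : ℕ) (hn : 1 ≤ n) (β : ℝ) {e : EuclideanSpace ℝ (Fin n)}
    (he : ‖e‖ = 1) (r : ℝ) :
    ∫ z in ball (0 : EuclideanSpace ℝ (Fin n)) r, ⟪e, z⟫ ^ 2 / ‖z‖ ^ β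
      = ∫ z in ball (0 : EuclideanSpace ℝ (Fin n)) r,
          (z (⟨0, hn⟩ : Fin n)) ^ 2 / ‖z‖ ^ β := by
  classical
  set i0 : Fin n := ⟨0, hn⟩
  have hcard : Module.finrank ℝ (EuclideanSpace ℝ (Fin n)) = Fintype.card (Fin n) := by
    rw [finrank_euclideanSpace_fin, Fintype.card_fin]
  have horth : Orthonormal ℝ (Set.restrict ({i0} : Set (Fin n)) (fun _ => e)) := by
    refine ⟨fun i => he, fun i j hij => absurd (Subtype.ext ?_) hij⟩
    have hi := i.2; have hj := j.2
    simp only [Set.mem_singleton_iff] at hi hj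
    rw [hi, hj]
  obtain ⟨b, hb⟩ := horth.exists_orthonormalBasis_extension_of_card_eq hcard
  have hbe : b i0 = e := hb i0 rfl
  set T := b.repr.symm with hT
  have hmp : MeasurePreserving (⇑T) volume volume := T.measurePreserving
  have hemb : MeasurableEmbedding (⇑T) := T.toHomeomorph.measurableEmbedding
  have hpre : (⇑T) ⁻¹' (ball (0 : EuclideanSpace ℝ (Fin n)) r) = ball 0 r := by
    ext w
    simp only [Set.mem_preimage, mem_ball, dist_zero_right]
    rw [T.norm_map]
  have := hmp.setIntegral_preimage_emb hemb
    (fun z => ⟪e, z⟫ ^ 2 / ‖z‖ ^ β) (ball (0 : EuclideanSpace ℝ (Fin n)) r)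
  rw [hpre] at this
  rw [← this]
  refine setIntegral_congr_fun measurableSet_ball fun w _ => ?_
  have h1 : ⟪e, T w⟫ = w i0 := by
    rw [← hbe, ← b.repr_apply_apply (T w) i0, hT,
      LinearIsometryEquiv.apply_symm_apply]
  rw [h1, T.norm_map]

lemma scaling_reduce (n : ℕ) (hn : 1 ≤ n) {β : ℝ} (i : Fin n) {r : ℝ} (hr : 0 < r) :
    ∫ z in ball (0 : EuclideanSpace ℝ (Fin n)) r, (z i) ^ 2 / ‖z‖ ^ β
      = r ^ ((n:ℝ) + 2 - β) *
        ∫ z in ball (0 : EuclideanSpace ℝ (Fin n)) 1, (z i) ^ 2 / ‖z‖ ^ β := by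
  haveI : Nonempty (Fin n) := Fin.pos_iff_nonempty.mp hn
  set f : EuclideanSpace ℝ (Fin n) → ℝ := fun z => (z i) ^ 2 / ‖z‖ ^ β with hf
  have hsmul : r • ball (0 : EuclideanSpace ℝ (Fin n)) 1 = ball 0 r := by
    rw [_root_.smul_ball hr.ne' (0 : EuclideanSpace ℝ (Fin n)) 1, smul_zero,
      Real.norm_eq_abs, abs_of_pos hr, mul_one]
  have hcomp := Measure.setIntegral_comp_smul_of_pos (volume : Measure (EuclideanSpace ℝ (Fin n)))
    f (ball (0 : EuclideanSpace ℝ (Fin n)) 1) hr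
  rw [hsmul] at hcomp
  have hptw : ∀ x : EuclideanSpace ℝ (Fin n), f (r • x) = r ^ ((2:ℝ) - β) * f x := by
    intro x
    rcases eq_or_ne x 0 with rfl | hx
    · simp only [smul_zero, hf]
      simp [Real.zero_rpow, norm_zero]
    · have hxpos : (0:ℝ) < ‖x‖ := norm_pos_iff.mpr hx
      have hsm : (r • x) i = r * x i := rfl
      rw [hf]
      simp only [hsm, norm_smul, Real.norm_eq_abs, abs_of_pos hr]
      rw [Real.mul_rpow hr.le (norm_nonneg x), Real.rpow_sub hr, Real.rpow_two]
      field_simp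
  have hL : ∫ x in ball (0 : EuclideanSpace ℝ (Fin n)) 1, f (r • x)
      = r ^ ((2:ℝ) - β) * ∫ x in ball (0 : EuclideanSpace ℝ (Fin n)) 1, f x := by
    simp_rw [hptw]
    rw [integral_const_mul]
  rw [hL] at hcomp
  have hfr : Module.finrank ℝ (EuclideanSpace ℝ (Fin n)) = n := finrank_euclideanSpace_fin
  rw [hfr] at hcomp
  have hrn : ((r ^ n : ℝ))⁻¹ ≠ 0 := by positivity
  have : (r:ℝ) ^ ((n:ℝ) + 2 - β) = r ^ n * r ^ ((2:ℝ) - β) := by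
    rw [← Real.rpow_natCast r n, ← Real.rpow_add hr]
    congr 1; ring
  rw [smul_eq_mul] at hcomp
  have := hcomp
  calc ∫ z in ball (0 : EuclideanSpace ℝ (Fin n)) r, f z
      = r ^ n * (r ^ ((2:ℝ) - β) * ∫ x in ball (0 : EuclideanSpace ℝ (Fin n)) 1, f x) := by
        rw [hcomp]
        have hrn' : (r:ℝ) ^ n ≠ 0 := by positivity
        field_simp
    _ = r ^ ((n:ℝ) + 2 - β) * ∫ z in ball (0 : EuclideanSpace ℝ (Fin n)) 1, f z := by
        rw [‹(r:ℝ) ^ ((n:ℝ) + 2 - β) = r ^ n * r ^ ((2:ℝ) - β)›]; ring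

lemma J_pos (n : ℕ) (hn : 1 ≤ n) {β : ℝ} (hβl : (n:ℝ) < β) (hβu : β < n + 2) :
    0 < ∫ z in ball (0 : EuclideanSpace ℝ (Fin n)) 1,
        (z (⟨0, hn⟩ : Fin n)) ^ 2 / ‖z‖ ^ β := by
  haveI : Nonempty (Fin n) := Fin.pos_iff_nonempty.mp hn
  haveI : Nontrivial (EuclideanSpace ℝ (Fin n)) := inferInstance
  set i0 : Fin n := ⟨0, hn⟩
  set f : EuclideanSpace ℝ (Fin n) → ℝ := fun z => (z i0) ^ 2 / ‖z‖ ^ β with hf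
  have hnonneg : 0 ≤ᶠ[ae (volume.restrict (ball (0 : EuclideanSpace ℝ (Fin n)) 1))] f :=
    Filter.Eventually.of_forall fun z => by
      simp only [hf, Pi.zero_apply]
      positivity
  have hint : IntegrableOn f (ball (0 : EuclideanSpace ℝ (Fin n)) 1) :=
    integrableOn_coord_sq n hn hβl hβu one_pos i0
  rw [setIntegral_pos_iff_support_of_nonneg_ae hnonneg hint]
  -- the coordinate hyperplane is a proper submodule, hence null
  set φ : EuclideanSpace ℝ (Fin n) →ₗ[ℝ] ℝ :=
    (LinearMap.proj i0).comp (WithLp.linearEquiv 2 ℝ (∀ _ : Fin n, ℝ)).toLinearMap with hφ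
  have hφapply : ∀ z : EuclideanSpace ℝ (Fin n), φ z = z i0 := fun z => rfl
  have hker : (LinearMap.ker φ : Set (EuclideanSpace ℝ (Fin n)))
      = {z : EuclideanSpace ℝ (Fin n) | z i0 = 0} := by
    ext z
    simp [LinearMap.mem_ker, hφapply]
  have hne : LinearMap.ker φ ≠ ⊤ := by
    intro h
    have h1 : φ (EuclideanSpace.single i0 (1:ℝ)) = 0 := by
      rw [← LinearMap.mem_ker, h]; trivial
    rw [hφapply] at h1
    simp [EuclideanSpace.single_apply] at h1
  have hnull : volume {z : EuclideanSpace ℝ (Fin n) | z i0 = 0} = 0 := by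
    rw [← hker]
    exact Measure.addHaar_submodule volume _ hne
  have hsub : ball (0 : EuclideanSpace ℝ (Fin n)) 1 \ {z | z i0 = 0}
      ⊆ Function.support f ∩ ball 0 1 := by
    rintro z ⟨hz1, hz2⟩
    refine ⟨?_, hz1⟩
    simp only [Set.mem_setOf_eq] at hz2
    have hzne : z ≠ 0 := fun h => hz2 (by rw [h]; rfl)
    have : 0 < f z := by
      have h1 : (0:ℝ) < (z i0) ^ 2 := by positivity
      have h2 : (0:ℝ) < ‖z‖ ^ β := Real.rpow_pos_of_pos (norm_pos_iff.mpr hzne) _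
      exact div_pos h1 h2
    exact fun h => this.ne' h
  calc (0:ENNReal) < volume (ball (0 : EuclideanSpace ℝ (Fin n)) 1) :=
        measure_ball_pos volume 0 one_pos
    _ = volume (ball (0 : EuclideanSpace ℝ (Fin n)) 1 \ {z | z i0 = 0}) :=
        (measure_diff_null hnull).symm
    _ ≤ volume (Function.support f ∩ ball 0 1) := measure_mono hsub

lemma integrableOn_inner_sq (n : ℕ) (hn : 1 ≤ n) {β δ : ℝ} (hβl : (n:ℝ) < β)
    (hβu : β < n + 2) (hδ : 0 < δ) (K : EuclideanSpace ℝ (Fin n)) :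
    IntegrableOn (fun z : EuclideanSpace ℝ (Fin n) => ⟪K, z⟫ ^ 2 / ‖z‖ ^ β) (ball 0 δ) := by
  have hp : -(n:ℝ) < 2 - β := by linarith
  have hint := (integrableOn_norm_rpow n hn hp hδ).const_mul (‖K‖ ^ 2)
  refine Integrable.mono' hint ?_ (Filter.Eventually.of_forall fun z => ?_)
  · have hc : Continuous fun z : EuclideanSpace ℝ (Fin n) => ⟪K, z⟫ ^ 2 :=
      (continuous_const.inner continuous_id).pow 2
    have hm : Measurable fun x : ℝ => x ^ β := by measurability
    exact (hc.measurable.div (hm.comp measurable_norm)).aestronglyMeasurable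
  · have h2 : 0 ≤ (‖z‖:ℝ) ^ β := Real.rpow_nonneg (norm_nonneg _) _
    rw [Real.norm_eq_abs, abs_of_nonneg (div_nonneg (sq_nonneg _) h2)]
    rcases eq_or_ne K 0 with rfl | hK
    · simp only [inner_zero_left]
      have : (0:ℝ) ^ 2 / ‖z‖ ^ β = 0 := by simp
      rw [this]
      positivity
    · have hKpos : (0:ℝ) < ‖K‖ := norm_pos_iff.mpr hK
      set a : ℝ := ⟪K, z⟫ / ‖K‖ with haa
      have ha : |a| ≤ ‖z‖ := by
        rw [haa, abs_div, abs_of_pos hKpos, div_le_iff₀ hKpos, mul_comm]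
        exact abs_real_inner_le_norm K z
      have hsq : ⟪K, z⟫ ^ 2 = ‖K‖ ^ 2 * a ^ 2 := by rw [haa]; field_simp
      calc ⟪K, z⟫ ^ 2 / ‖z‖ ^ β = ‖K‖ ^ 2 * (a ^ 2 / ‖z‖ ^ β) := by rw [hsq]; ring
        _ ≤ ‖K‖ ^ 2 * ‖z‖ ^ (2 - β) :=
            mul_le_mul_of_nonneg_left (sq_div_le n z ha) (by positivity)

lemma one_le_lattice_norm (n : ℕ) {k : Fin n → ℤ} (hk : k ≠ 0) :
    1 ≤ ‖latticeVec n k‖ := by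
  obtain ⟨i, hi⟩ := Function.ne_iff.mp hk
  have h1 : (1:ℤ) ≤ |k i| := Int.one_le_abs (by simpa using hi)
  have h2 : (1:ℝ) ≤ |((k i : ℝ))| := by
    rw [← Int.cast_abs]
    exact_mod_cast h1
  calc (1:ℝ) ≤ |((k i : ℝ))| := h2
    _ = |latticeVec n k i| := rfl
    _ ≤ ‖latticeVec n k‖ := coord_abs_le_norm _ i

lemma multiplier_bound (n : ℕ) (hn : 1 ≤ n) {δ β c : ℝ} (hδ : 0 < δ) (hβl : (n:ℝ) < β)
    (hβu : β < n + 2) (hc : 0 < c) :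
    ∃ c₁ : ℝ, 0 < c₁ ∧ ∀ k : Fin n → ℤ, k ≠ 0 →
      nonlocalMultiplier n δ β c k ≤ -(c * c₁ * ‖latticeVec n k‖ ^ (β - n)) := by
  set J : ℝ := ∫ z in ball (0 : EuclideanSpace ℝ (Fin n)) 1,
      (z (⟨0, hn⟩ : Fin n)) ^ 2 / ‖z‖ ^ β with hJ
  have hJpos : 0 < J := J_pos n hn hβl hβu
  set m0 : ℝ := min δ 1 with hm0
  have hm0pos : 0 < m0 := lt_min hδ one_pos
  refine ⟨m0 ^ ((n:ℝ) + 2 - β) * J / 4, by positivity, fun k hk => ?_⟩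
  set K := latticeVec n k with hK
  have hK1 : 1 ≤ ‖K‖ := one_le_lattice_norm n hk
  have hKpos : (0:ℝ) < ‖K‖ := lt_of_lt_of_le one_pos hK1
  have hKne : K ≠ 0 := fun h => by rw [h] at hKpos; simp at hKpos
  set r : ℝ := m0 / ‖K‖ with hr
  have hrpos : 0 < r := div_pos hm0pos hKpos
  have hrδ : r ≤ δ := by
    calc r ≤ m0 := by
          rw [hr]
          exact div_le_self hm0pos.le hK1
      _ ≤ δ := min_le_left _ _
  set e : EuclideanSpace ℝ (Fin n) := ‖K‖⁻¹ • K with he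
  have hene : ‖e‖ = 1 := norm_smul_inv_norm hKne
  -- express the multiplier via the nonnegative integral I
  set g : EuclideanSpace ℝ (Fin n) → ℝ := fun z => (1 - Real.cos ⟪K, z⟫) / ‖z‖ ^ β with hg
  have hmult : nonlocalMultiplier n δ β c k
      = -(c * ∫ z in ball (0 : EuclideanSpace ℝ (Fin n)) δ, g z) := by
    rw [nonlocalMultiplier]
    have : ∀ z : EuclideanSpace ℝ (Fin n),
        (Real.cos ⟪latticeVec n k, z⟫ - 1) / ‖z‖ ^ β = -(g z) := by
      intro z; rw [hg, ← hK]; ring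
    simp_rw [this]
    rw [integral_neg]
    ring
  have hgint : IntegrableOn g (ball (0 : EuclideanSpace ℝ (Fin n)) δ) :=
    integrableOn_one_sub_cos n hn hβl hβu hδ K
  have hginner : IntegrableOn (fun z : EuclideanSpace ℝ (Fin n) => ⟪K, z⟫ ^ 2 / ‖z‖ ^ β)
      (ball 0 r) :=
    (integrableOn_inner_sq n hn hβl hβu hδ K).mono_set (ball_subset_ball hrδ)
  -- step 1 : reduce to the small ball
  have hstep1 : ∫ z in ball (0 : EuclideanSpace ℝ (Fin n)) r, g z
      ≤ ∫ z in ball (0 : EuclideanSpace ℝ (Fin n)) δ, g z := by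
    refine setIntegral_mono_set hgint ?_ (HasSubset.Subset.eventuallyLE (ball_subset_ball hrδ))
    refine Filter.Eventually.of_forall fun z => ?_
    have h1 := Real.cos_le_one ⟪K, z⟫
    simp only [hg, Pi.zero_apply]
    exact div_nonneg (by linarith) (Real.rpow_nonneg (norm_nonneg _) _)
  -- step 2 : quadratic lower bound on the small ball
  have hstep2 : ∫ z in ball (0 : EuclideanSpace ℝ (Fin n)) r,
      (1/4) * (⟪K, z⟫ ^ 2 / ‖z‖ ^ β) ≤ ∫ z in ball (0 : EuclideanSpace ℝ (Fin n)) r, g z := by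
    refine setIntegral_mono_on (hginner.const_mul _)
      (hgint.mono_set (ball_subset_ball hrδ)) measurableSet_ball fun z hz => ?_
    simp only [mem_ball, dist_zero_right] at hz
    have habs : |⟪K, z⟫| ≤ 1 := by
      calc |⟪K, z⟫| ≤ ‖K‖ * ‖z‖ := abs_real_inner_le_norm K z
        _ ≤ ‖K‖ * r := by
            exact mul_le_mul_of_nonneg_left hz.le hKpos.le
        _ = m0 := by rw [hr]; field_simp
        _ ≤ 1 := min_le_right _ _
    have hq := quarter_sq_le_one_sub_cos habs
    rcases eq_or_ne z 0 with rfl | hz0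
    · simp [hg]
    · have hzb : (0:ℝ) < ‖z‖ ^ β := Real.rpow_pos_of_pos (norm_pos_iff.mpr hz0) _
      show 1/4 * (⟪K, z⟫ ^ 2 / ‖z‖ ^ β) ≤ (1 - Real.cos ⟪K, z⟫) / ‖z‖ ^ β
      have hre : 1/4 * (⟪K, z⟫ ^ 2 / ‖z‖ ^ β) = (⟪K, z⟫ ^ 2 / 4) / ‖z‖ ^ β := by ring
      rw [hre]
      exact (div_le_div_iff_of_pos_right hzb).mpr hq
  -- step 3 : compute the small-ball integral
  have hKe : ∀ z : EuclideanSpace ℝ (Fin n), ⟪K, z⟫ = ‖K‖ * ⟪e, z⟫ := by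
    intro z
    rw [he, real_inner_smul_left]
    field_simp
  have hstep3 : ∫ z in ball (0 : EuclideanSpace ℝ (Fin n)) r, ⟪K, z⟫ ^ 2 / ‖z‖ ^ β
      = ‖K‖ ^ 2 * (r ^ ((n:ℝ) + 2 - β) * J) := by
    have h1 : ∀ z : EuclideanSpace ℝ (Fin n),
        ⟪K, z⟫ ^ 2 / ‖z‖ ^ β = ‖K‖ ^ 2 * (⟪e, z⟫ ^ 2 / ‖z‖ ^ β) := by
      intro z; rw [hKe z]; ring
    simp_rw [h1]
    rw [integral_const_mul, rotation_reduce n hn β hene r, scaling_reduce n hn _ hrpos, ← hJ]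
  -- assemble
  have hI : c * (m0 ^ ((n:ℝ) + 2 - β) * J / 4) * ‖K‖ ^ (β - (n:ℝ))
      ≤ c * ∫ z in ball (0 : EuclideanSpace ℝ (Fin n)) δ, g z := by
    have hint1 : ∫ z in ball (0 : EuclideanSpace ℝ (Fin n)) r,
        (1/4) * (⟪K, z⟫ ^ 2 / ‖z‖ ^ β) = (1/4) * (‖K‖ ^ 2 * (r ^ ((n:ℝ) + 2 - β) * J)) := by
      rw [integral_const_mul, hstep3]
    have hval : (1/4) * (‖K‖ ^ 2 * (r ^ ((n:ℝ) + 2 - β) * J))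
        = (m0 ^ ((n:ℝ) + 2 - β) * J / 4) * ‖K‖ ^ (β - (n:ℝ)) := by
      have hrq : r ^ ((n:ℝ) + 2 - β) = m0 ^ ((n:ℝ) + 2 - β) * (‖K‖ ^ ((n:ℝ) + 2 - β))⁻¹ := by
        rw [hr, Real.div_rpow hm0pos.le hKpos.le]
        rfl
      have hKq : ‖K‖ ^ 2 * (‖K‖ ^ ((n:ℝ) + 2 - β))⁻¹ = ‖K‖ ^ (β - (n:ℝ)) := by
        rw [← Real.rpow_natCast ‖K‖ 2, ← Real.rpow_neg hKpos.le, ← Real.rpow_add hKpos]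
        norm_num
        ring_nf
      calc (1/4) * (‖K‖ ^ 2 * (r ^ ((n:ℝ) + 2 - β) * J))
          = (m0 ^ ((n:ℝ) + 2 - β) * J / 4) * (‖K‖ ^ 2 * (‖K‖ ^ ((n:ℝ) + 2 - β))⁻¹) := by
            rw [hrq]; ring
        _ = (m0 ^ ((n:ℝ) + 2 - β) * J / 4) * ‖K‖ ^ (β - (n:ℝ)) := by rw [hKq]
    have := le_trans (le_of_eq (hint1.symm ▸ hval.symm : _)) (hstep2.trans hstep1)
    calc c * (m0 ^ ((n:ℝ) + 2 - β) * J / 4) * ‖K‖ ^ (β - (n:ℝ))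
        = c * ((m0 ^ ((n:ℝ) + 2 - β) * J / 4) * ‖K‖ ^ (β - (n:ℝ))) := by ring
      _ ≤ c * ∫ z in ball (0 : EuclideanSpace ℝ (Fin n)) δ, g z :=
          mul_le_mul_of_nonneg_left this hc.le
  rw [hmult]
  have : c * (m0 ^ ((n:ℝ) + 2 - β) * J / 4) * ‖K‖ ^ (β - (n:ℝ))
      = c * (m0 ^ ((n:ℝ) + 2 - β) * J / 4) * ‖latticeVec n k‖ ^ (β - (n:ℝ)) := by rw [← hK]
  linarith [hI]

end Aux

/-- Periodic nonlocal Poisson equation with singular kernel `n < β < n+2`: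
zero-mean data `f ∈ H^s(Tⁿ)`, `s ≥ 0`, yields a zero-mean solution
`u ∈ H^{s+β−n}(Tⁿ)` — the solution gains `β − n` derivatives. -/
theorem nonlocal_poisson_regularity_singular_kernel (n : ℕ) (hn : 1 ≤ n)
    (δ β c s : ℝ) (hδ : 0 < δ) (hβl : (n : ℝ) < β) (hβu : β < n + 2)
    (hc : 0 < c) (hs : 0 ≤ s)
    (fhat uhat : (Fin n → ℤ) → ℂ)
    (hfmean : fhat 0 = 0) (humean : uhat 0 = 0)
    (hfH : Summable (fun k : Fin n → ℤ =>
      (1 + ‖latticeVec n k‖ ^ 2) ^ s * ‖fhat k‖ ^ 2))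
    (heq : ∀ k : Fin n → ℤ,
      (nonlocalMultiplier n δ β c k : ℂ) * uhat k = fhat k) :
    Summable (fun k : Fin n → ℤ =>
      (1 + ‖latticeVec n k‖ ^ 2) ^ (s + β - n) * ‖uhat k‖ ^ 2) := by
  obtain ⟨c₁, hc₁, hmb⟩ := multiplier_bound n hn hδ hβl hβu hc
  set Cst : ℝ := (2:ℝ) ^ (β - (n:ℝ)) / (c * c₁) ^ 2 with hCst
  have hCstpos : 0 < Cst := by positivity
  refine Summable.of_nonneg_of_le (fun k => by positivity) (fun k => ?_) (hfH.mul_left Cst)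
  by_cases hk : k = 0
  · subst hk
    rw [humean]
    simp only [norm_zero]
    have h0 : (0:ℝ) ≤ Cst * ((1 + ‖latticeVec n 0‖ ^ 2) ^ s * ‖fhat 0‖ ^ 2) := by positivity
    simpa using h0
  · set K := latticeVec n k with hK
    set X : ℝ := ‖K‖ ^ (β - (n:ℝ)) with hX
    have hK1 : 1 ≤ ‖K‖ := one_le_lattice_norm n hk
    have hKpos : (0:ℝ) < ‖K‖ := lt_of_lt_of_le one_pos hK1
    have hXpos : 0 < X := Real.rpow_pos_of_pos hKpos _
    set m : ℝ := nonlocalMultiplier n δ β c k with hm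
    have hmle : m ≤ -(c * c₁ * X) := hmb k hk
    have hccX : (0:ℝ) < c * c₁ * X := by positivity
    have hmneg : m < 0 := lt_of_le_of_lt hmle (by linarith)
    have habs : c * c₁ * X ≤ |m| := by
      rw [abs_of_nonpos hmneg.le]
      linarith
    have hmne : (m:ℂ) ≠ 0 := by
      simp only [ne_eq, Complex.ofReal_eq_zero]
      exact hmneg.ne
    have hnorm : |m| * ‖uhat k‖ = ‖fhat k‖ := by
      have := congrArg norm (heq k)
      rwa [norm_mul, Complex.norm_real, Real.norm_eq_abs] at this
    have hub : ‖uhat k‖ ≤ ‖fhat k‖ / (c * c₁ * X) := by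
      rw [le_div_iff₀ (by positivity : (0:ℝ) < c * c₁ * X)]
      calc ‖uhat k‖ * (c * c₁ * X) ≤ ‖uhat k‖ * |m| :=
            mul_le_mul_of_nonneg_left habs (norm_nonneg _)
        _ = |m| * ‖uhat k‖ := by ring
        _ = ‖fhat k‖ := hnorm
    have hub2 : ‖uhat k‖ ^ 2 ≤ ‖fhat k‖ ^ 2 / (c * c₁ * X) ^ 2 := by
      calc ‖uhat k‖ ^ 2 ≤ (‖fhat k‖ / (c * c₁ * X)) ^ 2 :=
            pow_le_pow_left₀ (norm_nonneg _) hub 2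
        _ = ‖fhat k‖ ^ 2 / (c * c₁ * X) ^ 2 := by rw [div_pow]
    have hgrow : (1 + ‖K‖ ^ 2) ^ (s + β - (n:ℝ))
        ≤ (1 + ‖K‖ ^ 2) ^ s * ((2:ℝ) ^ (β - (n:ℝ)) * X ^ 2) := by
      have hbase : (0:ℝ) < 1 + ‖K‖ ^ 2 := by positivity
      have hsplit : (1 + ‖K‖ ^ 2) ^ (s + β - (n:ℝ))
          = (1 + ‖K‖ ^ 2) ^ s * (1 + ‖K‖ ^ 2) ^ (β - (n:ℝ)) := by
        rw [← Real.rpow_add hbase]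
        congr 1
        ring
      rw [hsplit]
      refine mul_le_mul_of_nonneg_left ?_ (Real.rpow_nonneg hbase.le _)
      have h2K : 1 + ‖K‖ ^ 2 ≤ 2 * ‖K‖ ^ 2 := by nlinarith
      have hXsq : ((‖K‖:ℝ) ^ (2:ℕ)) ^ (β - (n:ℝ)) = X ^ 2 := by
        rw [hX, ← Real.rpow_natCast ‖K‖ 2, ← Real.rpow_mul (norm_nonneg K),
          ← Real.rpow_natCast (‖K‖ ^ (β - (n:ℝ))) 2, ← Real.rpow_mul (norm_nonneg K)]
        congr 1
        push_cast
        ring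
      calc (1 + ‖K‖ ^ 2) ^ (β - (n:ℝ)) ≤ (2 * ‖K‖ ^ 2) ^ (β - (n:ℝ)) :=
            Real.rpow_le_rpow hbase.le h2K (by linarith)
        _ = (2:ℝ) ^ (β - (n:ℝ)) * X ^ 2 := by
            rw [Real.mul_rpow (by norm_num) (by positivity), hXsq]
    calc (1 + ‖K‖ ^ 2) ^ (s + β - (n:ℝ)) * ‖uhat k‖ ^ 2
        ≤ ((1 + ‖K‖ ^ 2) ^ s * ((2:ℝ) ^ (β - (n:ℝ)) * X ^ 2))
            * (‖fhat k‖ ^ 2 / (c * c₁ * X) ^ 2) := by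
          refine mul_le_mul hgrow hub2 (by positivity) (by positivity)
      _ = Cst * ((1 + ‖K‖ ^ 2) ^ s * ‖fhat k‖ ^ 2) := by
          rw [hCst]
          field_simp
end

section
/- Let β < n and suppose u is bounded and measurable with a jump discontinuity across a hypersurface (i.e., u is not continuous at some point x₀ ∈ Ω but has one-sided limits). If f = L^{δ,β}u, then the singular (discontinuous) parts of u and f coincide up to a continuous function: f(x) + c^{δ,β} (∫_{B_δ(0)} ‖z‖^{−β} dz) u(x) is a continuous function of x on Ω. In particular, u and f have jump discontinuities at exactly the same locations, with jump magnitudes proportional by the factor c^{δ,β} ∫_{B_δ(0)} ‖z‖^{−β} dz. -/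
open MeasureTheory Metric Real

section auxiliary

open Set Measure Filter

lemma kernel_integrable' {E : Type*} [NormedAddCommGroup E] [NormedSpace ℝ E]
    [MeasurableSpace E] [BorelSpace E] [FiniteDimensional ℝ E] [Nontrivial E]
    (μ : Measure E) [μ.IsAddHaarMeasure] {δ β : ℝ} (hδ : 0 < δ)
    (hβ : β < Module.finrank ℝ E) :
    IntegrableOn (fun z : E => ‖z‖ ^ (-β)) (ball 0 δ) μ := by
  set n := Module.finrank ℝ E with hn
  have hn1 : 1 ≤ n := Module.finrank_pos
  set f : ℝ → ℝ := (Set.Ioo 0 δ).indicator (fun r => r ^ (-β)) with hfdef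
  have hfm : Measurable f := (measurable_id.pow_const _).indicator measurableSet_Ioo
  have hIoo : IntegrableOn (fun r : ℝ => f r * r ^ (n - 1 : ℕ)) (Ioi (0:ℝ)) := by
    have h0 : IntegrableOn (fun r : ℝ => r ^ ((n:ℝ) - 1 - β)) (Ioo (0:ℝ) δ) := by
      have h1 : (-1 : ℝ) < (n:ℝ) - 1 - β := by linarith
      have := intervalIntegral.intervalIntegrable_rpow' (a := 0) (b := δ) h1
      rwa [intervalIntegrable_iff_integrableOn_Ioo_of_le hδ.le] at this
    have heq : EqOn (fun r : ℝ => f r * r ^ (n - 1 : ℕ))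
        ((Ioo (0:ℝ) δ).indicator (fun r : ℝ => r ^ ((n:ℝ) - 1 - β))) (Ioi (0:ℝ)) := by
      intro r hr
      by_cases h : r ∈ Ioo (0:ℝ) δ
      · simp only [hfdef, indicator_of_mem h]
        rw [← Real.rpow_natCast r (n-1), ← Real.rpow_add h.1]
        congr 1
        push_cast [Nat.cast_sub hn1]
        ring
      · simp [hfdef, indicator_of_notMem h]
    refine (IntegrableOn.congr_fun ?_ heq.symm measurableSet_Ioi)
    exact ((integrable_indicator_iff measurableSet_Ioo).2 h0).integrableOn
  have hIoiPow : Integrable (f ∘ Subtype.val) (volumeIoiPow (n - 1)) := by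
    rw [Measure.volumeIoiPow,
      integrable_withDensity_iff ((measurable_subtype_coe.pow_const _).ennreal_ofReal)
        (Filter.Eventually.of_forall fun x => ENNReal.ofReal_lt_top)]
    have : Integrable (fun x : Ioi (0:ℝ) => f x.1 * x.1 ^ (n - 1 : ℕ))
        (Measure.comap Subtype.val volume) := by
      rw [IntegrableOn, ← map_comap_subtype_coe measurableSet_Ioi] at hIoo
      exact (MeasurableEmbedding.subtype_coe measurableSet_Ioi).integrable_map_iff.1 hIoo
    refine this.congr (Filter.Eventually.of_forall fun x => ?_)
    simp [Function.comp, ENNReal.toReal_ofReal (pow_nonneg x.2.out.le _)]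
  have hprod : Integrable (f ∘ Subtype.val ∘ Prod.snd)
      (μ.toSphere.prod (volumeIoiPow (n - 1))) := by
    have hm : AEStronglyMeasurable (f ∘ Subtype.val ∘ Prod.snd)
        (μ.toSphere.prod (volumeIoiPow (n - 1))) :=
      ((hfm.comp measurable_subtype_coe).comp measurable_snd).aestronglyMeasurable
    rw [integrable_prod_iff hm]
    refine ⟨Filter.Eventually.of_forall fun x => hIoiPow, ?_⟩
    exact (integrable_const (∫ y, ‖(f ∘ Subtype.val) y‖ ∂(volumeIoiPow (n-1)))).congr
      (Filter.Eventually.of_forall fun x => rfl)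
  have key : Integrable (fun x : E => f ‖x‖) μ := by
    rw [show μ = μ.restrict ({(0:E)}ᶜ) from (restrict_compl_singleton _).symm,
      ← map_comap_subtype_coe (measurableSet_singleton (0:E)).compl,
      (MeasurableEmbedding.subtype_coe (measurableSet_singleton (0:E)).compl).integrable_map_iff]
    have h := ((μ.measurePreserving_homeomorphUnitSphereProd).integrable_comp_emb
      (Homeomorph.measurableEmbedding _)).2 hprod
    refine h.congr (Filter.Eventually.of_forall fun x => ?_)
    simp [Function.comp, homeomorphUnitSphereProd_apply_snd_coe]
  rw [← integrable_indicator_iff measurableSet_ball]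
  refine key.congr ?_
  have h0 : ({(0:E)}ᶜ : Set E) ∈ ae μ := by
    rw [mem_ae_iff]; simpa using measure_singleton (0:E)
  filter_upwards [h0] with x hx
  have hx0 : (0:ℝ) < ‖x‖ := norm_pos_iff.2 hx
  by_cases hxb : x ∈ ball (0:E) δ
  · rw [indicator_of_mem hxb]
    simp only [hfdef]
    rw [indicator_of_mem (mem_Ioo.2 ⟨hx0, mem_ball_zero_iff.1 hxb⟩)]
  · rw [indicator_of_notMem hxb]
    simp only [hfdef]
    rw [indicator_of_notMem (fun h => hxb (mem_ball_zero_iff.2 h.2))]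

end auxiliary

/-- For an integrable kernel (`β < n`) and bounded measurable `u` with a jump
discontinuity at some `x₀ ∈ Ω`, if `f = L^{δ,β} u`, then
`f + c^{δ,β} (∫_{B_δ(0)} ‖z‖^{−β} dz) · u` is continuous on `Ω`: the singular parts
of `u` and `f` coincide up to a continuous function, so `u` and `f` share jump
locations with jump magnitudes proportional by `c^{δ,β} ∫_{B_δ(0)} ‖z‖^{−β} dz`. -/
theorem jump_correspondence_integrable_kernel (n : ℕ) (hn : 1 ≤ n) (δ β c : ℝ)
    (hδ : 0 < δ) (hβ : β < n) (hc : 0 < c)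
    (Ω : Set (EuclideanSpace ℝ (Fin n))) (hΩ : IsOpen Ω)
    (u f : EuclideanSpace ℝ (Fin n) → ℝ)
    (hum : Measurable u) (hub : ∃ C, ∀ x, |u x| ≤ C)
    (x₀ : EuclideanSpace ℝ (Fin n)) (hx₀ : x₀ ∈ Ω) (hjump : ¬ ContinuousAt u x₀)
    (hf : ∀ x, f x = c * ∫ y in ball x δ, (u y - u x) / ‖y - x‖ ^ β) :
    ContinuousOn (fun x => f x +
      (c * ∫ z in ball (0 : EuclideanSpace ℝ (Fin n)) δ, ‖z‖ ^ (-β)) * u x) Ω := by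
  classical
  haveI : Nonempty (Fin n) := Fin.pos_iff_nonempty.1 hn
  obtain ⟨C, hC⟩ := hub
  have hC0 : 0 ≤ C := le_trans (abs_nonneg _) (hC x₀)
  set K : EuclideanSpace ℝ (Fin n) → ℝ := (ball (0:EuclideanSpace ℝ (Fin n)) δ).indicator (fun z => ‖z‖ ^ (-β)) with hKdef
  have hKint : Integrable K := by
    rw [hKdef, integrable_indicator_iff measurableSet_ball]
    exact kernel_integrable' volume hδ (by rw [finrank_euclideanSpace_fin]; exact_mod_cast hβ)
  have hKm : Measurable K := (measurable_norm.pow_const _).indicator measurableSet_ball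
  have hKeven : ∀ z : EuclideanSpace ℝ (Fin n), K (-z) = K z := by
    intro z
    simp [hKdef, Set.indicator_apply, mem_ball_zero_iff]
  have hu_loc : LocallyIntegrable u (volume : Measure (EuclideanSpace ℝ (Fin n))) :=
    (memLp_top_of_bound hum.aestronglyMeasurable C
      (ae_of_all _ fun x => hC x)).locallyIntegrable le_top
  -- the convolution
  set conv : EuclideanSpace ℝ (Fin n) → ℝ := fun x => ∫ t, K t * u (x - t) with hconv
  -- integrability of the integrands involved
  have hmul : ∀ (g : EuclideanSpace ℝ (Fin n) → ℝ), Integrable g (volume : Measure (EuclideanSpace ℝ (Fin n))) → ∀ x : EuclideanSpace ℝ (Fin n),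
      Integrable (fun t => g t * u (x - t)) (volume : Measure (EuclideanSpace ℝ (Fin n))) := by
    intro g hg x
    have : Integrable (fun t => u (x - t) * g t) (volume : Measure (EuclideanSpace ℝ (Fin n))) :=
      hg.bdd_mul ((hum.comp (measurable_const.sub measurable_id)).aestronglyMeasurable)
        (ae_of_all _ fun t => by simpa using hC (x - t))
    exact this.congr (Filter.Eventually.of_forall fun t => mul_comm _ _)
  -- continuity of conv
  have hcont : Continuous conv := by
    have approx : ∀ ε : ℝ, 0 < ε → ∃ h : EuclideanSpace ℝ (Fin n) → ℝ, Continuous h ∧ ∀ x, dist (h x) (conv x) ≤ ε := by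
      intro ε hε
      obtain ⟨g, hgsupp, hgL1, hgcont, hgint⟩ :=
        hKint.exists_hasCompactSupport_integral_sub_le
          (show (0:ℝ) < ε / (C + 1) by positivity)
      refine ⟨fun x => ∫ t, g t * u (x - t), ?_, ?_⟩
      · exact hgsupp.continuous_convolution_left (ContinuousLinearMap.mul ℝ ℝ) hgcont hu_loc
      · intro x
        rw [dist_eq_norm]
        have h1 : Integrable (fun t => g t * u (x - t)) (volume : Measure (EuclideanSpace ℝ (Fin n))) := hmul g hgint x
        have h2 : Integrable (fun t => K t * u (x - t)) (volume : Measure (EuclideanSpace ℝ (Fin n))) := hmul K hKint x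
        rw [hconv, ← integral_sub h1 h2]
        have hre : ∀ t, g t * u (x - t) - K t * u (x - t) = (g t - K t) * u (x - t) :=
          fun t => by ring
        simp_rw [hre]
        have step1 : ‖∫ t, (g t - K t) * u (x - t)‖ ≤ ∫ t, ‖g t - K t‖ * C := by
          refine (norm_integral_le_integral_norm _).trans ?_
          refine integral_mono_of_nonneg (Filter.Eventually.of_forall fun t => norm_nonneg _)
            ((hgint.sub hKint).norm.mul_const C)
            (Filter.Eventually.of_forall fun t => ?_)
          simp only [norm_mul]
          exact mul_le_mul_of_nonneg_left (by simpa using hC (x - t)) (norm_nonneg _)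
        refine step1.trans ?_
        rw [integral_mul_const]
        have hnn : ∫ t, ‖g t - K t‖ ≤ ε / (C + 1) := by
          have : ∀ t, ‖g t - K t‖ = ‖K t - g t‖ := fun t => norm_sub_rev _ _
          simp_rw [this]
          exact hgL1
        calc (∫ t, ‖g t - K t‖) * C ≤ (ε / (C + 1)) * C := by
              exact mul_le_mul_of_nonneg_right hnn hC0
          _ ≤ ε := by
              rw [div_mul_eq_mul_div, div_le_iff₀ (by positivity)]
              nlinarith
    -- uniform approximation implies continuity
    have : ∀ k : ℕ, ∃ h : EuclideanSpace ℝ (Fin n) → ℝ, Continuous h ∧ ∀ x, dist (h x) (conv x) ≤ ((k:ℝ)+1)⁻¹ :=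
      fun k => approx _ (by positivity)
    choose F hFc hFd using this
    have htu : TendstoUniformly F conv Filter.atTop := by
      rw [Metric.tendstoUniformly_iff]
      intro ε hε
      obtain ⟨k₀, hk₀⟩ := exists_nat_gt (ε⁻¹)
      filter_upwards [Filter.eventually_ge_atTop k₀] with k hk x
      have h1 : ((k:ℝ)+1)⁻¹ < ε := by
        rw [inv_lt_comm₀ (by positivity) hε]
        calc ε⁻¹ < k₀ := hk₀
          _ ≤ (k:ℝ) := by exact_mod_cast hk
          _ < (k:ℝ) + 1 := by linarith
      exact lt_of_le_of_lt (by rw [dist_comm]; exact hFd k x) h1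
    exact htu.continuous (Filter.Eventually.of_forall hFc).frequently
  -- pointwise identity
  have hpt : ∀ x : EuclideanSpace ℝ (Fin n), f x + (c * ∫ z in ball (0:EuclideanSpace ℝ (Fin n)) δ, ‖z‖ ^ (-β)) * u x = c * conv x := by
    intro x
    have hKx : Integrable (fun y : EuclideanSpace ℝ (Fin n) => K (y - x)) (volume : Measure (EuclideanSpace ℝ (Fin n))) :=
      hKint.comp_sub_right x
    have hmem : ∀ y : EuclideanSpace ℝ (Fin n), y ∈ ball x δ ↔ y - x ∈ ball (0:EuclideanSpace ℝ (Fin n)) δ := by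
      intro y; rw [mem_ball_zero_iff, mem_ball, dist_eq_norm]
    -- Step 1: rewrite the set integral
    have s1 : ∫ y in ball x δ, (u y - u x) / ‖y - x‖ ^ β
        = ∫ y in ball x δ, (u y - u x) * K (y - x) := by
      refine setIntegral_congr_fun measurableSet_ball fun y hy => ?_
      rw [hKdef, Set.indicator_of_mem ((hmem y).1 hy)]
      rw [Real.rpow_neg (norm_nonneg _), div_eq_mul_inv]
    -- Step 2: extend to the whole space
    have s2 : ∫ y in ball x δ, (u y - u x) * K (y - x)
        = ∫ y, (u y - u x) * K (y - x) := by
      refine setIntegral_eq_integral_of_forall_compl_eq_zero fun y hy => ?_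
      rw [hKdef, Set.indicator_of_notMem (fun hh => hy ((hmem y).2 hh)), mul_zero]
    -- integrability pieces
    have h1 : Integrable (fun y : EuclideanSpace ℝ (Fin n) => u y * K (y - x)) (volume : Measure (EuclideanSpace ℝ (Fin n))) :=
      hKx.bdd_mul hum.aestronglyMeasurable (ae_of_all _ fun y => by simpa using hC y)
    have h2 : Integrable (fun y : EuclideanSpace ℝ (Fin n) => u x * K (y - x)) (volume : Measure (EuclideanSpace ℝ (Fin n))) :=
      hKx.const_mul (u x)
    -- Step 3: split
    have s3 : ∫ y, (u y - u x) * K (y - x)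
        = (∫ y, u y * K (y - x)) - u x * ∫ y, K (y - x) := by
      have : ∀ y : EuclideanSpace ℝ (Fin n), (u y - u x) * K (y - x) = u y * K (y - x) - u x * K (y - x) :=
        fun y => by ring
      simp_rw [this]
      rw [integral_sub h1 h2, integral_const_mul]
    -- Step 4: translation invariance
    have s4 : ∫ y, K (y - x) = ∫ z in ball (0:EuclideanSpace ℝ (Fin n)) δ, ‖z‖ ^ (-β) := by
      rw [integral_sub_right_eq_self K x, hKdef, integral_indicator measurableSet_ball]
    -- Step 5: relate to conv
    have s5 : ∫ y, u y * K (y - x) = conv x := by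
      show _ = ∫ t, K t * u (x - t)
      have := integral_sub_left_eq_self (fun t => K t * u (x - t)) (volume : Measure (EuclideanSpace ℝ (Fin n))) x
      simp only [sub_sub_cancel] at this
      rw [← this]
      refine integral_congr_ae (Filter.Eventually.of_forall fun y => ?_)
      have hK2 : K (x - y) = K (y - x) := by rw [← hKeven (y - x), neg_sub]
      show u y * K (y - x) = K (x - y) * u y
      rw [hK2, mul_comm]
    rw [hf x, s1, s2, s3, s4, s5]
    ring
  have : (fun x => f x + (c * ∫ z in ball (0:EuclideanSpace ℝ (Fin n)) δ, ‖z‖ ^ (-β)) * u x)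
      = fun x => c * conv x := funext hpt
  rw [this]
  exact (continuous_const.mul hcont).continuousOn
end

section
/- For the periodic nonlocal diffusion equation with integrable kernel (β < n), the solution operator is not smoothing: if u₀ ∈ L²(Tⁿ) \ H^ε(Tⁿ) for some ε > 0, then u(·,t) ∉ H^ε(Tⁿ) for all t ≥ 0. Specifically, because sup_k |m^{δ,β}(k)| = M < ∞, we can write u(·,t) = e^{−At}u₀ + w(·,t) where A = c^{δ,β}∫_{B_δ(0)}‖z‖^{−β}dz and w(·,t) is smoother than u₀ (w(·,t) gains regularity), so u(·,t) has exactly the regularity of u₀. -/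
open MeasureTheory Metric Real
open scoped RealInnerProductSpace

lemma integrableOn_rpow_neg_ball (n : ℕ) (hn : 1 ≤ n) (δ β : ℝ) (hδ : 0 < δ) (hβ : β < n) :
    IntegrableOn (fun z : EuclideanSpace ℝ (Fin n) => ‖z‖ ^ (-β)) (ball 0 δ) := by
  set E := EuclideanSpace ℝ (Fin n)
  have hfr : Module.finrank ℝ E = n := finrank_euclideanSpace_fin
  set r : ℕ → ℝ := fun i => δ / 2 ^ i with hr
  have hrpos : ∀ i, 0 < r i := fun i => div_pos hδ (by positivity)
  have hrsucc : ∀ i, r (i + 1) = r i / 2 := by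
    intro i; simp [hr, pow_succ, div_div]
  set A : ℕ → Set E := fun i => {z : E | ‖z‖ ∈ Set.Icc (r (i+1)) (r i)} with hA
  have hAmeas : ∀ i, MeasurableSet (A i) :=
    fun i => measurable_norm measurableSet_Icc
  set f : E → ℝ := fun z => ‖z‖ ^ (-β) with hf
  have hfmeas : Measurable f := by fun_prop
  set C : ℕ → ℝ := fun i => r (i+1) ^ (-β) + r i ^ (-β) with hC
  have hCnn : ∀ i, 0 ≤ C i := fun i => by
    have := (hrpos (i+1)).le; have := (hrpos i).le; positivity
  have hbound : ∀ i, ∀ z ∈ A i, ‖f z‖ ≤ C i := by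
    intro i z hz
    obtain ⟨h1, h2⟩ := hz
    have hz0 : 0 < ‖z‖ := lt_of_lt_of_le (hrpos (i+1)) h1
    rw [Real.norm_of_nonneg (Real.rpow_nonneg (norm_nonneg z) _)]
    rcases le_or_gt 0 (-β) with hb | hb
    · calc ‖z‖ ^ (-β) ≤ r i ^ (-β) := Real.rpow_le_rpow hz0.le h2 hb
        _ ≤ C i := le_add_of_nonneg_left (Real.rpow_nonneg (hrpos _).le _)
    · calc ‖z‖ ^ (-β) ≤ r (i+1) ^ (-β) :=
          Real.rpow_le_rpow_of_nonpos (hrpos _) h1 hb.le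
        _ ≤ C i := le_add_of_nonneg_right (Real.rpow_nonneg (hrpos _).le _)
  have hAsub : ∀ i, A i ⊆ closedBall (0 : E) (r i) := by
    intro i z hz; simpa [mem_closedBall, dist_zero_right] using hz.2
  have hAfin : ∀ i, volume (A i) < ⊤ := fun i =>
    lt_of_le_of_lt (measure_mono (hAsub i)) measure_closedBall_lt_top
  have hint : ∀ i, IntegrableOn f (A i) := by
    intro i
    refine Integrable.mono' (g := fun _ => C i) (integrableOn_const (hAfin i).ne)
      (hfmeas.aestronglyMeasurable.restrict) ?_
    filter_upwards [ae_restrict_mem (hAmeas i)] with z hz using hbound i z hz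
  -- summability of the integrals
  set s : ℝ := (n : ℝ) - β with hs
  have hspos : 0 < s := by simpa [hs, sub_pos] using hβ
  set q : ℝ := ((2:ℝ) ^ s)⁻¹ with hq
  have hqpos : 0 < q := by positivity
  have hqlt : q < 1 := by
    rw [hq, inv_lt_one_iff₀]
    right
    exact Real.one_lt_rpow_iff_of_pos (by norm_num) |>.2 (Or.inl ⟨by norm_num, hspos⟩)
  set V : ℝ := (volume (closedBall (0 : E) 1)).toReal with hV
  have hVnn : 0 ≤ V := ENNReal.toReal_nonneg
  have hCr : ∀ i, C i * r i ^ n = ((2:ℝ) ^ β + 1) * δ ^ s * q ^ i := by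
    intro i
    have h2 : ((2:ℝ) ^ (-β)) ≠ 0 := by positivity
    have e1 : r (i+1) ^ (-β) = r i ^ (-β) * (2:ℝ) ^ β := by
      rw [hrsucc i, Real.div_rpow (hrpos i).le (by norm_num)]
      rw [div_eq_mul_inv, ← Real.rpow_neg (by norm_num : (0:ℝ) ≤ 2), neg_neg]
    have e2 : (r i : ℝ) ^ n = r i ^ ((n : ℝ)) := by
      rw [← Real.rpow_natCast]
    have e3 : r i ^ (-β) * r i ^ ((n:ℝ)) = r i ^ s := by
      rw [← Real.rpow_add (hrpos i), hs]; ring_nf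
    have e4 : r i ^ s = δ ^ s * q ^ i := by
      rw [hr]
      rw [Real.div_rpow hδ.le (by positivity)]
      rw [div_eq_mul_inv]
      congr 1
      rw [hq, inv_pow]
      congr 1
      rw [← Real.rpow_natCast ((2:ℝ)) i, ← Real.rpow_mul (by norm_num : (0:ℝ) ≤ 2),
        ← Real.rpow_natCast ((2:ℝ)^s) i, ← Real.rpow_mul (by norm_num : (0:ℝ) ≤ 2),
        mul_comm]
    calc C i * r i ^ n = (r i ^ (-β) * (2:ℝ) ^ β + r i ^ (-β)) * (r i ^ ((n:ℝ))) := by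
          show (r (i+1) ^ (-β) + r i ^ (-β)) * (r i ^ n) = _
          rw [e1, e2]
      _ = ((2:ℝ) ^ β + 1) * (r i ^ (-β) * r i ^ ((n:ℝ))) := by ring
      _ = ((2:ℝ) ^ β + 1) * δ ^ s * q ^ i := by rw [e3, e4]; ring
  have hsum : Summable (fun i : ℕ => ∫ z in A i, ‖f z‖) := by
    refine Summable.of_nonneg_of_le
      (fun i => setIntegral_nonneg (hAmeas i) (fun z _ => norm_nonneg _))
      (fun i => ?_)
      (((summable_geometric_of_lt_one hqpos.le hqlt).mul_left
        (((2:ℝ) ^ β + 1) * δ ^ s * V)))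
    have step1 : ∫ z in A i, ‖f z‖ ≤ ∫ _ in A i, C i := by
      refine setIntegral_mono_on (hint i).norm
        (integrableOn_const (hAfin i).ne) (hAmeas i) ?_
      exact fun z hz => hbound i z hz
    have step2 : ∫ _ in A i, C i = (volume (A i)).toReal * C i := by
      simp [setIntegral_const, smul_eq_mul, measureReal_def]
    have step3 : (volume (A i)).toReal * C i ≤ (volume (closedBall (0:E) (r i))).toReal * C i := by
      apply mul_le_mul_of_nonneg_right _ (hCnn i)
      exact ENNReal.toReal_mono measure_closedBall_lt_top.ne (measure_mono (hAsub i))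
    have step4 : (volume (closedBall (0:E) (r i))).toReal = r i ^ n * V := by
      rw [Measure.addHaar_closedBall' (volume) (0:E) (hrpos i).le, hfr]
      rw [ENNReal.toReal_mul, ENNReal.toReal_ofReal (by positivity)]
    calc ∫ z in A i, ‖f z‖ ≤ (volume (A i)).toReal * C i := step1.trans_eq step2
      _ ≤ (volume (closedBall (0:E) (r i))).toReal * C i := step3
      _ = C i * r i ^ n * V := by rw [step4]; ring
      _ = ((2:ℝ) ^ β + 1) * δ ^ s * V * q ^ i := by rw [hCr i]; ring
  have hUnion : IntegrableOn f (⋃ i, A i) :=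
    integrableOn_iUnion_of_summable_integral_norm hint hsum
  have hcover : ball (0:E) δ \ {0} ⊆ ⋃ i, A i := by
    intro z hz
    obtain ⟨hzball, hz0⟩ := hz
    have hzn : 0 < ‖z‖ := by
      exact norm_pos_iff.2 (Set.mem_singleton_iff.not.1 hz0)
    have hzδ : ‖z‖ < δ := by simpa [mem_ball, dist_zero_right] using hzball
    have hex : ∃ i : ℕ, r i < ‖z‖ := by
      obtain ⟨i, hi⟩ := pow_unbounded_of_one_lt (δ / ‖z‖) (one_lt_two (α := ℝ))
      exact ⟨i, by rwa [hr, div_lt_iff₀ (by positivity), ← div_lt_iff₀' hzn]⟩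
    classical
    set m := Nat.find hex with hm
    have hPm : r m < ‖z‖ := Nat.find_spec hex
    have hm0 : m ≠ 0 := by
      intro h
      rw [h] at hPm
      simp only [hr, pow_zero, div_one] at hPm
      linarith
    obtain ⟨k, hk⟩ : ∃ k, m = k + 1 := ⟨m - 1, (Nat.succ_pred_eq_of_pos (Nat.pos_of_ne_zero hm0)).symm⟩
    have hnk : ¬ (r k < ‖z‖) := Nat.find_min hex (by omega)
    refine Set.mem_iUnion.2 ⟨k, ?_⟩
    exact ⟨by rw [← hk]; exact hPm.le, le_of_not_gt hnk⟩
  have hzero : volume ({0} : Set E) = 0 := by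
    haveI : Nontrivial E := Module.nontrivial_of_finrank_pos (R := ℝ)
      (M := E) (by rw [hfr]; omega)
    exact measure_singleton 0
  have hin : IntegrableOn f (ball (0:E) δ \ ({0} : Set E)) := hUnion.mono_set hcover
  have hae : (ball (0:E) δ : Set E) =ᵐ[volume] (ball (0:E) δ \ ({0} : Set E)) := by
    refine (MeasureTheory.diff_ae_eq_self.2 ?_).symm
    exact measure_mono_null Set.inter_subset_right hzero
  exact hin.congr_set_ae hae
  

/-- For an integrable kernel (`β < n`), the periodic nonlocal diffusion semigroup
is not smoothing: if `u₀ ∈ L²(Tⁿ) \ H^ε(Tⁿ)` for some `ε > 0`, then the spectral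
solution `û(k,t) = e^{m^{δ,β}(k)t} û₀(k)` stays outside `H^ε(Tⁿ)` for every `t ≥ 0`. -/
theorem nonlocal_diffusion_not_smoothing (n : ℕ) (hn : 1 ≤ n) (δ β c ε : ℝ)
    (hδ : 0 < δ) (hβ : β < n) (hc : 0 < c) (hε : 0 < ε)
    (u₀hat : (Fin n → ℤ) → ℂ)
    (hL2 : Summable (fun k : Fin n → ℤ => ‖u₀hat k‖ ^ 2))
    (hnotH : ¬ Summable (fun k : Fin n → ℤ =>
      (1 + ‖latticeVec n k‖ ^ 2) ^ ε * ‖u₀hat k‖ ^ 2)) :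
    ∀ t : ℝ, 0 ≤ t →
      ¬ Summable (fun k : Fin n → ℤ =>
        (1 + ‖latticeVec n k‖ ^ 2) ^ ε *
          ‖Real.exp (nonlocalMultiplier n δ β c k * t) • u₀hat k‖ ^ 2) := by
  set E := EuclideanSpace ℝ (Fin n)
  have hker : IntegrableOn (fun z : E => ‖z‖ ^ (-β)) (ball 0 δ) :=
    integrableOn_rpow_neg_ball n hn δ β hδ hβ
  set A : ℝ := ∫ z in ball (0:E) δ, ‖z‖ ^ (-β) with hA
  -- uniform lower bound on the multiplier
  have hmul_lb : ∀ k : Fin n → ℤ, -(2 * c * A) ≤ nonlocalMultiplier n δ β c k := by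
    intro k
    have hptwise : ∀ z : E, (-2) * ‖z‖ ^ (-β) ≤ (Real.cos ⟪latticeVec n k, z⟫ - 1) / ‖z‖ ^ β := by
      intro z
      have h2 : (-2:ℝ) ≤ Real.cos ⟪latticeVec n k, z⟫ - 1 := by
        have := Real.neg_one_le_cos ⟪latticeVec n k, z⟫; linarith
      rcases eq_or_lt_of_le (Real.rpow_nonneg (norm_nonneg z) β) with hp | hp
      · have hβ0 : β ≠ 0 := by
          intro h
          rw [h, Real.rpow_zero] at hp
          norm_num at hp
        have hz0 : ‖z‖ = 0 := by
          by_contra h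
          have hzpos : 0 < ‖z‖ := lt_of_le_of_ne (norm_nonneg z) (Ne.symm h)
          have := Real.rpow_pos_of_pos hzpos β
          rw [← hp] at this
          exact lt_irrefl 0 this
        have hz : ‖z‖ ^ (-β) = 0 := by
          rw [hz0, Real.zero_rpow (neg_ne_zero.2 hβ0)]
        rw [hz, ← hp, div_zero, mul_zero]
      · calc (-2:ℝ) * ‖z‖ ^ (-β) = (-2) / ‖z‖ ^ β := by
              rw [Real.rpow_neg (norm_nonneg z)]; ring
          _ ≤ (Real.cos ⟪latticeVec n k, z⟫ - 1) / ‖z‖ ^ β := by gcongr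
    have hintg : IntegrableOn
        (fun z : E => (Real.cos ⟪latticeVec n k, z⟫ - 1) / ‖z‖ ^ β) (ball 0 δ) := by
      refine Integrable.mono' (hker.const_mul 2) ?_ ?_
      · apply Measurable.aestronglyMeasurable
        have hm : Measurable fun z : E => Real.cos ⟪latticeVec n k, z⟫ - 1 :=
          ((Real.continuous_cos.comp ((continuous_const.inner continuous_id))).sub
            continuous_const).measurable
        exact hm.div (by fun_prop)
      · filter_upwards with z
        rw [Real.norm_eq_abs, abs_div, abs_of_nonneg (Real.rpow_nonneg (norm_nonneg z) β),
          Real.rpow_neg (norm_nonneg z), div_eq_mul_inv]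
        apply mul_le_mul_of_nonneg_right _ (by positivity)
        have h1 : Real.cos ⟪latticeVec n k, z⟫ ≤ 1 := Real.cos_le_one _
        have h2 : -1 ≤ Real.cos ⟪latticeVec n k, z⟫ := Real.neg_one_le_cos _
        rw [abs_le]; constructor <;> linarith
    have hInt_lb : (-2) * A ≤ ∫ z in ball (0:E) δ,
        (Real.cos ⟪latticeVec n k, z⟫ - 1) / ‖z‖ ^ β := by
      rw [hA, ← integral_const_mul]
      exact setIntegral_mono (hker.const_mul (-2)) hintg hptwise
    have : c * ((-2) * A) ≤ nonlocalMultiplier n δ β c k :=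
      mul_le_mul_of_nonneg_left hInt_lb hc.le
    linarith
  intro t ht hS
  apply hnotH
  set B : ℝ := Real.exp (-(2 * c * A) * t) with hB
  have hBpos : 0 < B := Real.exp_pos _
  have hexp_lb : ∀ k, B ≤ Real.exp (nonlocalMultiplier n δ β c k * t) := by
    intro k
    apply Real.exp_le_exp.2
    exact mul_le_mul_of_nonneg_right (hmul_lb k) ht
  refine Summable.of_nonneg_of_le (fun k => by positivity) (fun k => ?_) (hS.mul_left (B⁻¹ ^ 2))
  have hnorm : ‖Real.exp (nonlocalMultiplier n δ β c k * t) • u₀hat k‖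
      = Real.exp (nonlocalMultiplier n δ β c k * t) * ‖u₀hat k‖ := by
    rw [norm_smul, Real.norm_eq_abs, Real.abs_exp]
  rw [hnorm]
  have hw : (0:ℝ) ≤ (1 + ‖latticeVec n k‖ ^ 2) ^ ε := by positivity
  have key : B ^ 2 * ‖u₀hat k‖ ^ 2
      ≤ (Real.exp (nonlocalMultiplier n δ β c k * t) * ‖u₀hat k‖) ^ 2 := by
    rw [mul_pow]
    apply mul_le_mul_of_nonneg_right _ (by positivity)
    exact pow_le_pow_left₀ hBpos.le (hexp_lb k) 2
  calc (1 + ‖latticeVec n k‖ ^ 2) ^ ε * ‖u₀hat k‖ ^ 2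
      = B⁻¹ ^ 2 * ((1 + ‖latticeVec n k‖ ^ 2) ^ ε * (B ^ 2 * ‖u₀hat k‖ ^ 2)) := by
        have hBne : B ≠ 0 := hBpos.ne'
        field_simp
    _ ≤ B⁻¹ ^ 2 * ((1 + ‖latticeVec n k‖ ^ 2) ^ ε *
        (Real.exp (nonlocalMultiplier n δ β c k * t) * ‖u₀hat k‖) ^ 2) := by
        apply mul_le_mul_of_nonneg_left _ (by positivity)
        exact mul_le_mul_of_nonneg_left key hw
end
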